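/- Every polynomial p that is strictly positive on [-1,1] admits a representation p(x) = Σ_{k=0}^N a_k (1-x)^k (1+x)^{N-k} with all coefficients a_k ≥ 0, for some N ∈ ℕ (Bernstein's theorem). -/

import Mathlib

open Polynomial Finset

/-- `p` is a nonnegative combination of `(1-x)^k (1+x)^(N-k)`, stated at the level of
evaluations. -/
def BRep (N : ℕ) (p : ℝ[X]) : Prop :=
  ∃ f : ℕ → ℝ, (∀ k, 0 ≤ f k) ∧
    ∀ x : ℝ, p.eval x = ∑ k ∈ range (N + 1), f k * (1 - x) ^ k * (1 + x) ^ (N - k)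

lemma brep_add {N : ℕ} {p q : ℝ[X]} (hp : BRep N p) (hq : BRep N q) : BRep N (p + q) := by
  obtain ⟨f, hf, hfe⟩ := hp
  obtain ⟨g, hg, hge⟩ := hq
  refine ⟨fun k => f k + g k, fun k => add_nonneg (hf k) (hg k), fun x => ?_⟩
  simp only [eval_add, hfe, hge, ← Finset.sum_add_distrib]
  exact Finset.sum_congr rfl fun k _ => by ring

lemma brep_pad {N : ℕ} {p : ℝ[X]} (hp : BRep N p) : BRep (N + 1) p := by
  obtain ⟨f, hf, hfe⟩ := hp
  refine ⟨fun k => (if k ≤ N then f k / 2 else 0) + (if 1 ≤ k then f (k - 1) / 2 else 0),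
    fun k => by have := hf k; have := hf (k-1); dsimp only; split_ifs <;> simp <;> linarith, fun x => ?_⟩
  have key : ∀ k ∈ range (N + 1 + 1),
      ((if k ≤ N then f k / 2 else 0) + (if 1 ≤ k then f (k - 1) / 2 else 0)) * (1 - x) ^ k *
        (1 + x) ^ (N + 1 - k)
      = (if k ≤ N then f k / 2 * (1 - x) ^ k * (1 + x) ^ (N + 1 - k) else 0)
        + (if 1 ≤ k then f (k - 1) / 2 * (1 - x) ^ k * (1 + x) ^ (N + 1 - k) else 0) := by
    intro k _
    by_cases h1 : k ≤ N <;> by_cases h2 : 1 ≤ k <;> simp [h1, h2] <;> ring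
  rw [Finset.sum_congr rfl key, Finset.sum_add_distrib]
  have e1 : ∑ k ∈ range (N + 1 + 1),
      (if k ≤ N then f k / 2 * (1 - x) ^ k * (1 + x) ^ (N + 1 - k) else 0)
      = (1 + x) / 2 * ∑ k ∈ range (N + 1), f k * (1 - x) ^ k * (1 + x) ^ (N - k) := by
    rw [Finset.sum_range_succ, if_neg (by omega), add_zero, Finset.mul_sum]
    refine Finset.sum_congr rfl fun k hk => ?_
    have hk' : k ≤ N := by simpa [Nat.lt_succ_iff] using hk
    rw [if_pos hk']
    have : N + 1 - k = (N - k) + 1 := by omega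
    rw [this, pow_succ]
    ring
  have e2 : ∑ k ∈ range (N + 1 + 1),
      (if 1 ≤ k then f (k - 1) / 2 * (1 - x) ^ k * (1 + x) ^ (N + 1 - k) else 0)
      = (1 - x) / 2 * ∑ k ∈ range (N + 1), f k * (1 - x) ^ k * (1 + x) ^ (N - k) := by
    rw [Finset.sum_range_succ', if_neg (by omega), add_zero, Finset.mul_sum]
    refine Finset.sum_congr rfl fun k hk => ?_
    rw [if_pos (by omega)]
    simp only [Nat.add_sub_cancel]
    have : N + 1 - (k + 1) = N - k := by omega
    rw [this, pow_succ]
    ring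
  rw [e1, e2, hfe]
  ring

lemma brep_mono {N M : ℕ} {p : ℝ[X]} (h : N ≤ M) (hp : BRep N p) : BRep M p := by
  induction M, h using Nat.le_induction with
  | base => exact hp
  | succ M _ ih => exact brep_pad ih

lemma brep_mul {N M : ℕ} {p q : ℝ[X]} (hp : BRep N p) (hq : BRep M q) :
    BRep (N + M) (p * q) := by
  obtain ⟨f, hf, hfe⟩ := hp
  obtain ⟨g, hg, hge⟩ := hq
  refine ⟨fun i => ∑ k ∈ range (N + 1),
      f k * (if i ∈ Finset.Ico k (k + M + 1) then g (i - k) else 0),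
    fun i => Finset.sum_nonneg fun k _ => mul_nonneg (hf k) (by split_ifs <;> simp [hg]),
    fun x => ?_⟩
  rw [eval_mul, hfe, hge, Finset.sum_mul_sum]
  symm
  calc
    ∑ i ∈ range (N + M + 1), (∑ k ∈ range (N + 1),
        f k * (if i ∈ Finset.Ico k (k + M + 1) then g (i - k) else 0)) * (1 - x) ^ i *
          (1 + x) ^ (N + M - i)
      = ∑ i ∈ range (N + M + 1), ∑ k ∈ range (N + 1),
          (if i ∈ Finset.Ico k (k + M + 1) then
            f k * g (i - k) * (1 - x) ^ i * (1 + x) ^ (N + M - i) else 0) := by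
        refine Finset.sum_congr rfl fun i _ => ?_
        rw [Finset.sum_mul, Finset.sum_mul]
        refine Finset.sum_congr rfl fun k _ => ?_
        split_ifs <;> ring
    _ = ∑ k ∈ range (N + 1), ∑ i ∈ range (N + M + 1),
          (if i ∈ Finset.Ico k (k + M + 1) then
            f k * g (i - k) * (1 - x) ^ i * (1 + x) ^ (N + M - i) else 0) := Finset.sum_comm
    _ = ∑ k ∈ range (N + 1), ∑ j ∈ range (M + 1),
          f k * g j * (1 - x) ^ (k + j) * (1 + x) ^ (N + M - (k + j)) := by
        refine Finset.sum_congr rfl fun k hk => ?_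
        have hkN : k ≤ N := by simpa [Nat.lt_succ_iff] using hk
        rw [Finset.sum_ite_mem, Finset.inter_eq_right.mpr (by
          intro i hi
          simp only [Finset.mem_Ico] at hi
          simp only [Finset.mem_range]
          omega)]
        rw [Finset.sum_Ico_eq_sum_range]
        have : k + M + 1 - k = M + 1 := by omega
        rw [this]
        refine Finset.sum_congr rfl fun j _ => ?_
        simp [Nat.add_sub_cancel_left]
    _ = ∑ k ∈ range (N + 1), ∑ j ∈ range (M + 1),
          (f k * (1 - x) ^ k * (1 + x) ^ (N - k)) * (g j * (1 - x) ^ j * (1 + x) ^ (M - j)) := by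
        refine Finset.sum_congr rfl fun k hk => Finset.sum_congr rfl fun j hj => ?_
        have hkN : k ≤ N := by simpa [Nat.lt_succ_iff] using hk
        have hjM : j ≤ M := by simpa [Nat.lt_succ_iff] using hj
        have h1 : N + M - (k + j) = (N - k) + (M - j) := by omega
        rw [h1, pow_add, pow_add]
        ring

lemma brep_const {c : ℝ} {p : ℝ[X]} (hc : 0 ≤ c) (h : ∀ x : ℝ, p.eval x = c) : BRep 0 p := by
  exact ⟨fun _ => c, fun _ => hc, fun x => by simp [h x]⟩

lemma brep_linear {a b : ℝ} {p : ℝ[X]} (ha : 0 ≤ a) (hb : 0 ≤ b)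
    (h : ∀ x : ℝ, p.eval x = a * (1 + x) + b * (1 - x)) : BRep 1 p := by
  refine ⟨fun k => if k = 0 then a else b, fun k => by dsimp only; split_ifs <;> assumption, fun x => ?_⟩
  rw [h x]
  simp only [Finset.sum_range_succ, Finset.sum_range_zero]
  norm_num



lemma choose_id (m k : ℕ) (h1 : 1 ≤ k) (hkm : k - 1 ≤ m) :
    (m.choose k : ℝ) * k = (m.choose (k - 1) : ℝ) * ((m : ℝ) - k + 1) := by
  have h := Nat.choose_succ_right_eq m (k - 1)
  rw [Nat.sub_add_cancel h1] at h
  have h' : ((m.choose k * k : ℕ) : ℝ) = ((m.choose (k - 1) * (m - (k - 1)) : ℕ) : ℝ) := by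
    exact_mod_cast congrArg (fun n : ℕ => (n : ℝ)) h
  push_cast [Nat.cast_sub hkm, Nat.cast_sub h1] at h'
  linarith

lemma key_lemma (a₀ a₂ b₁ : ℝ) (h₀ : 0 < a₀) (h₂ : 0 < a₂) (hd : b₁ ^ 2 < 4 * (a₀ * a₂)) :
    ∃ m : ℕ, ∀ k : ℕ, 0 ≤ a₀ * (m.choose k : ℝ)
      + (if 1 ≤ k then b₁ * (m.choose (k - 1) : ℝ) else 0)
      + (if 2 ≤ k then a₂ * (m.choose (k - 2) : ℝ) else 0) := by
  set B := |b₁| with hBdef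
  have hB0 : 0 ≤ B := abs_nonneg _
  have hBb : -B ≤ b₁ := neg_abs_le _
  have hB2 : B ^ 2 = b₁ ^ 2 := sq_abs _
  set ε := 4 * (a₀ * a₂) - B ^ 2 with hεdef
  have hε : 0 < ε := by rw [hεdef, hB2]; linarith
  obtain ⟨K₀, hK₀⟩ := exists_nat_ge (3 * B ^ 2 / ε)
  set K : ℕ := K₀ + 1 with hKdef
  have hK1 : (1 : ℝ) ≤ (K : ℝ) := by exact_mod_cast Nat.one_le_iff_ne_zero.mpr (by omega)
  have hK1n : 1 ≤ K := by omega
  have hKε : 3 * B ^ 2 ≤ ε * K := by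
    have h1 : 3 * B ^ 2 / ε ≤ (K : ℝ) := le_trans hK₀ (by push_cast [hKdef]; linarith)
    rw [div_le_iff₀ hε] at h1; linarith
  have hKK : B ^ 2 * ((K : ℝ) + 1) ^ 2 ≤ 4 * (a₀ * a₂) * (K : ℝ) ^ 2 := by
    have h1 : 3 * B ^ 2 * (K:ℝ) ≤ ε * (K:ℝ) * (K:ℝ) :=
      mul_le_mul_of_nonneg_right hKε (by linarith)
    have h2 : B ^ 2 * ((K:ℝ) - 1) ≥ 0 := mul_nonneg (sq_nonneg _) (by linarith)
    nlinarith [h1, h2]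
  obtain ⟨m, hm⟩ := exists_nat_ge (2 * (K : ℝ) + (K : ℝ) * B / a₀ + (K : ℝ) * B / a₂)
  have hd0 : 0 ≤ (K : ℝ) * B / a₀ := by positivity
  have hd2 : 0 ≤ (K : ℝ) * B / a₂ := by positivity
  have hm₀ : (K : ℝ) * B ≤ a₀ * ((m : ℝ) + 1 - 2 * K) := by
    have t1 : (K : ℝ) * B / a₀ ≤ (m : ℝ) + 1 - 2 * K := by linarith
    rw [div_le_iff₀ h₀] at t1; linarith
  have hm₂ : (K : ℝ) * B ≤ a₂ * ((m : ℝ) + 1 - 2 * K) := by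
    have t1 : (K : ℝ) * B / a₂ ≤ (m : ℝ) + 1 - 2 * K := by linarith
    rw [div_le_iff₀ h₂] at t1; linarith
  have hKm : 2 * K ≤ m := by
    have : (2 * K : ℝ) ≤ (m : ℝ) := by linarith
    exact_mod_cast this
  refine ⟨m, fun k => ?_⟩
  rcases Nat.eq_zero_or_pos k with hk0 | hk1
  · subst hk0; simp; positivity
  -- k ≥ 1
  have hc₂0 : (0 : ℝ) ≤ (m.choose (k - 1) : ℝ) := Nat.cast_nonneg _
  have hc₃0 : (0 : ℝ) ≤ (m.choose k : ℝ) := Nat.cast_nonneg _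
  suffices h : B * (m.choose (k - 1) : ℝ) ≤ a₀ * (m.choose k : ℝ)
      + (if 2 ≤ k then a₂ * (m.choose (k - 2) : ℝ) else 0) by
    rw [if_pos (show 1 ≤ k from hk1)]
    have hb : -B * (m.choose (k - 1) : ℝ) ≤ b₁ * (m.choose (k - 1) : ℝ) :=
      mul_le_mul_of_nonneg_right hBb hc₂0
    linarith
  have hitenn : 0 ≤ (if 2 ≤ k then a₂ * (m.choose (k - 2) : ℝ) else 0) := by
    split_ifs <;> positivity
  rcases le_or_gt k K with hkK | hkK
  · -- Case A : small k
    have id1 := choose_id m k hk1 (by omega)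
    have hk_real : (k : ℝ) ≤ (K : ℝ) := by exact_mod_cast hkK
    have h1 : B * (k : ℝ) ≤ a₀ * ((m : ℝ) - k + 1) := by
      have e1 : B * (k : ℝ) ≤ (K : ℝ) * B := by
        calc B * (k : ℝ) = (k : ℝ) * B := by ring
          _ ≤ (K : ℝ) * B := mul_le_mul_of_nonneg_right hk_real hB0
      have e2 : a₀ * ((m : ℝ) + 1 - 2 * K) ≤ a₀ * ((m : ℝ) - k + 1) :=
        mul_le_mul_of_nonneg_left (by linarith) h₀.le
      linarith
    have hkpos : (0 : ℝ) < (k : ℝ) := by exact_mod_cast hk1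
    have h2 : B * (m.choose (k - 1) : ℝ) * (k : ℝ) ≤ a₀ * (m.choose k : ℝ) * (k : ℝ) := by
      calc B * (m.choose (k - 1) : ℝ) * (k : ℝ)
          = (m.choose (k - 1) : ℝ) * (B * k) := by ring
        _ ≤ (m.choose (k - 1) : ℝ) * (a₀ * ((m : ℝ) - k + 1)) :=
            mul_le_mul_of_nonneg_left h1 hc₂0
        _ = a₀ * ((m.choose (k - 1) : ℝ) * ((m : ℝ) - k + 1)) := by ring
        _ = a₀ * ((m.choose k : ℝ) * k) := by rw [← id1]
        _ = a₀ * (m.choose k : ℝ) * (k : ℝ) := by ring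
    have h3 := le_of_mul_le_mul_right h2 hkpos
    linarith
  · rcases le_or_gt (k + K) (m + 1) with hkK2 | hkK2
    · -- Case C : middle k
      have hk2 : 2 ≤ k := by omega
      have id1 := choose_id m k hk1 (by omega)
      have id2 := choose_id m (k - 1) (by omega) (by omega)
      rw [show k - 1 - 1 = k - 2 by omega] at id2
      push_cast [Nat.cast_sub (show 1 ≤ k by omega)] at id2
      have hc₁0 : (0 : ℝ) ≤ (m.choose (k - 2) : ℝ) := Nat.cast_nonneg _
      set c₁ := (m.choose (k - 2) : ℝ)
      set c₂ := (m.choose (k - 1) : ℝ)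
      set c₃ := (m.choose k : ℝ)
      have idp : c₁ * c₃ * ((k : ℝ) * ((m : ℝ) - k + 2))
          = c₂ ^ 2 * (((k : ℝ) - 1) * ((m : ℝ) - k + 1)) := by
        linear_combination (c₁ * ((m : ℝ) - k + 2)) * id1 - (c₂ * ((m : ℝ) - k + 1)) * id2
      have hx : (K : ℝ) + 1 ≤ (k : ℝ) := by exact_mod_cast hkK
      have hy : (K : ℝ) ≤ (m : ℝ) - k + 1 := by
        have : (k : ℝ) + (K : ℝ) ≤ (m : ℝ) + 1 := by exact_mod_cast hkK2
        linarith
      have A1 : (k : ℝ) * K ≤ ((k : ℝ) - 1) * ((K : ℝ) + 1) := by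
        have expand : ((k : ℝ) - 1) * ((K : ℝ) + 1) = (k : ℝ) * K + ((k : ℝ) - (K : ℝ) - 1) := by
          ring
        rw [expand]; linarith
      have A2 : ((m : ℝ) - k + 2) * K ≤ ((m : ℝ) - k + 1) * ((K : ℝ) + 1) := by
        have expand : ((m : ℝ) - k + 1) * ((K : ℝ) + 1)
            = ((m : ℝ) - k + 2) * K + ((m : ℝ) - (k : ℝ) + 1 - (K : ℝ)) := by ring
        rw [expand]; linarith
      have P1 : (k : ℝ) * ((m : ℝ) - k + 2) * (K : ℝ) ^ 2
          ≤ ((k : ℝ) - 1) * ((m : ℝ) - k + 1) * ((K : ℝ) + 1) ^ 2 := by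
        have hn1 : (0 : ℝ) ≤ ((m : ℝ) - k + 2) * K := mul_nonneg (by linarith) (by linarith)
        have hn2 : (0 : ℝ) ≤ ((k : ℝ) - 1) * ((K : ℝ) + 1) :=
          mul_nonneg (by linarith) (by linarith)
        have hmm := mul_le_mul A1 A2 hn1 hn2
        calc (k : ℝ) * ((m : ℝ) - k + 2) * (K : ℝ) ^ 2
            = ((k : ℝ) * K) * (((m : ℝ) - k + 2) * K) := by ring
          _ ≤ (((k : ℝ) - 1) * ((K : ℝ) + 1)) * (((m : ℝ) - k + 1) * ((K : ℝ) + 1)) := hmm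
          _ = ((k : ℝ) - 1) * ((m : ℝ) - k + 1) * ((K : ℝ) + 1) ^ 2 := by ring
      have key1 : B ^ 2 * ((k : ℝ) * ((m : ℝ) - k + 2))
          ≤ 4 * (a₀ * a₂) * (((k : ℝ) - 1) * ((m : ℝ) - k + 1)) := by
        have hnn : (0 : ℝ) ≤ ((k : ℝ) - 1) * ((m : ℝ) - k + 1) :=
          mul_nonneg (by linarith) (by linarith)
        have hK2pos : (0 : ℝ) < (K : ℝ) ^ 2 := by positivity
        have q3 : (B ^ 2 * ((k : ℝ) * ((m : ℝ) - k + 2))) * (K : ℝ) ^ 2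
            ≤ (4 * (a₀ * a₂) * (((k : ℝ) - 1) * ((m : ℝ) - k + 1))) * (K : ℝ) ^ 2 := by
          calc (B ^ 2 * ((k : ℝ) * ((m : ℝ) - k + 2))) * (K : ℝ) ^ 2
              = B ^ 2 * ((k : ℝ) * ((m : ℝ) - k + 2) * (K : ℝ) ^ 2) := by ring
            _ ≤ B ^ 2 * (((k : ℝ) - 1) * ((m : ℝ) - k + 1) * ((K : ℝ) + 1) ^ 2) :=
                mul_le_mul_of_nonneg_left P1 (sq_nonneg B)
            _ = (B ^ 2 * ((K : ℝ) + 1) ^ 2) * (((k : ℝ) - 1) * ((m : ℝ) - k + 1)) := by ring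
            _ ≤ (4 * (a₀ * a₂) * (K : ℝ) ^ 2) * (((k : ℝ) - 1) * ((m : ℝ) - k + 1)) :=
                mul_le_mul_of_nonneg_right hKK hnn
            _ = (4 * (a₀ * a₂) * (((k : ℝ) - 1) * ((m : ℝ) - k + 1))) * (K : ℝ) ^ 2 := by ring
        exact le_of_mul_le_mul_right q3 hK2pos
      have key2 : (B * c₂) ^ 2 ≤ 4 * (a₀ * a₂) * (c₁ * c₃) := by
        have hkpos2 : (0 : ℝ) < (k : ℝ) * ((m : ℝ) - k + 2) := by
          have h1 : (0:ℝ) < (k:ℝ) := by exact_mod_cast hk1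
          exact mul_pos h1 (by linarith)
        have q4 : (B * c₂) ^ 2 * ((k : ℝ) * ((m : ℝ) - k + 2))
            ≤ (4 * (a₀ * a₂) * (c₁ * c₃)) * ((k : ℝ) * ((m : ℝ) - k + 2)) := by
          calc (B * c₂) ^ 2 * ((k : ℝ) * ((m : ℝ) - k + 2))
              = B ^ 2 * ((k : ℝ) * ((m : ℝ) - k + 2)) * c₂ ^ 2 := by ring
            _ ≤ 4 * (a₀ * a₂) * (((k : ℝ) - 1) * ((m : ℝ) - k + 1)) * c₂ ^ 2 :=
                mul_le_mul_of_nonneg_right key1 (sq_nonneg c₂)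
            _ = 4 * (a₀ * a₂) * (c₂ ^ 2 * (((k : ℝ) - 1) * ((m : ℝ) - k + 1))) := by ring
            _ = 4 * (a₀ * a₂) * (c₁ * c₃ * ((k : ℝ) * ((m : ℝ) - k + 2))) := by rw [← idp]
            _ = (4 * (a₀ * a₂) * (c₁ * c₃)) * ((k : ℝ) * ((m : ℝ) - k + 2)) := by ring
        exact le_of_mul_le_mul_right q4 hkpos2
      have key3 : 4 * (a₀ * a₂) * (c₁ * c₃) ≤ (a₀ * c₃ + a₂ * c₁) ^ 2 := by
        have h := sq_nonneg (a₀ * c₃ - a₂ * c₁)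
        have expand : (a₀ * c₃ + a₂ * c₁) ^ 2
            = 4 * (a₀ * a₂) * (c₁ * c₃) + (a₀ * c₃ - a₂ * c₁) ^ 2 := by ring
        rw [expand]; linarith
      have hS : 0 ≤ a₀ * c₃ + a₂ * c₁ :=
        add_nonneg (mul_nonneg h₀.le hc₃0) (mul_nonneg h₂.le hc₁0)
      have final : B * c₂ ≤ a₀ * c₃ + a₂ * c₁ := by
        calc B * c₂ = Real.sqrt ((B * c₂) ^ 2) := (Real.sqrt_sq (mul_nonneg hB0 hc₂0)).symm
          _ ≤ Real.sqrt ((a₀ * c₃ + a₂ * c₁) ^ 2) := Real.sqrt_le_sqrt (key2.trans key3)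
          _ = a₀ * c₃ + a₂ * c₁ := Real.sqrt_sq hS
      rw [if_pos hk2]
      linarith
    · -- Case B : large k
      have hk2 : 2 ≤ k := by omega
      rw [if_pos hk2]
      have hc₁0 : (0 : ℝ) ≤ (m.choose (k - 2) : ℝ) := Nat.cast_nonneg _
      rcases le_or_gt k (m + 1) with hkm | hkm
      · have id2 := choose_id m (k - 1) (by omega) (by omega)
        rw [show k - 1 - 1 = k - 2 by omega] at id2
        push_cast [Nat.cast_sub (show 1 ≤ k by omega)] at id2
        have hmk : (m : ℝ) - k + 2 ≤ (K : ℝ) := by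
          have : (m : ℝ) + 2 ≤ (k : ℝ) + (K : ℝ) := by exact_mod_cast hkK2
          linarith
        have hk1' : (m : ℝ) + 1 - 2 * (K : ℝ) ≤ (k : ℝ) - 1 := by
          have : (m : ℝ) + 2 ≤ (k : ℝ) + (K : ℝ) := by exact_mod_cast hkK2
          linarith
        have h1 : B * ((m : ℝ) - k + 2) ≤ a₂ * ((k : ℝ) - 1) := by
          have e1 : B * ((m : ℝ) - k + 2) ≤ B * K := mul_le_mul_of_nonneg_left hmk hB0
          have e2 : a₂ * ((m : ℝ) + 1 - 2 * K) ≤ a₂ * ((k : ℝ) - 1) :=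
            mul_le_mul_of_nonneg_left hk1' h₂.le
          have e0 : B * (K : ℝ) = (K : ℝ) * B := mul_comm _ _
          linarith [hm₂]
        have hkpos : (0 : ℝ) < (k : ℝ) - 1 := by
          have : (2 : ℝ) ≤ (k : ℝ) := by exact_mod_cast hk2
          linarith
        have h2 : B * (m.choose (k - 1) : ℝ) * ((k : ℝ) - 1)
            ≤ a₂ * (m.choose (k - 2) : ℝ) * ((k : ℝ) - 1) := by
          calc B * (m.choose (k - 1) : ℝ) * ((k : ℝ) - 1)
              = B * ((m.choose (k - 1) : ℝ) * ((k : ℝ) - 1)) := by ring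
            _ = B * ((m.choose (k - 2) : ℝ) * ((m : ℝ) - ((k : ℝ) - 1) + 1)) := by rw [id2]
            _ = (m.choose (k - 2) : ℝ) * (B * ((m : ℝ) - k + 2)) := by ring
            _ ≤ (m.choose (k - 2) : ℝ) * (a₂ * ((k : ℝ) - 1)) :=
                mul_le_mul_of_nonneg_left h1 hc₁0
            _ = a₂ * (m.choose (k - 2) : ℝ) * ((k : ℝ) - 1) := by ring
        have h3 := le_of_mul_le_mul_right h2 hkpos
        have h4 : 0 ≤ a₀ * (m.choose k : ℝ) := mul_nonneg h₀.le hc₃0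
        linarith
      · have hzero : m.choose (k - 1) = 0 := Nat.choose_eq_zero_of_lt (by omega)
        rw [hzero]
        have h4 : 0 ≤ a₀ * (m.choose k : ℝ) := mul_nonneg h₀.le hc₃0
        have h5 : 0 ≤ a₂ * (m.choose (k - 2) : ℝ) := mul_nonneg h₂.le hc₁0
        simp
        linarith



lemma expand_sum (a₀ b₁ a₂ s t : ℝ) (m : ℕ) :
    ∑ k ∈ range (m + 3), (a₀ * (m.choose k : ℝ)
        + (if 1 ≤ k then b₁ * (m.choose (k - 1) : ℝ) else 0)
        + (if 2 ≤ k then a₂ * (m.choose (k - 2) : ℝ) else 0)) * s ^ k * t ^ (m + 2 - k)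
    = (a₂ * s ^ 2 + b₁ * (s * t) + a₀ * t ^ 2) * (s + t) ^ m := by
  have hbin : (s + t) ^ m = ∑ i ∈ range (m + 1), s ^ i * t ^ (m - i) * (m.choose i : ℝ) :=
    add_pow s t m
  have split : ∑ k ∈ range (m + 3), (a₀ * (m.choose k : ℝ)
        + (if 1 ≤ k then b₁ * (m.choose (k - 1) : ℝ) else 0)
        + (if 2 ≤ k then a₂ * (m.choose (k - 2) : ℝ) else 0)) * s ^ k * t ^ (m + 2 - k)
      = (∑ k ∈ range (m + 3), a₀ * (m.choose k : ℝ) * s ^ k * t ^ (m + 2 - k))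
        + (∑ k ∈ range (m + 3),
            (if 1 ≤ k then b₁ * (m.choose (k - 1) : ℝ) * s ^ k * t ^ (m + 2 - k) else 0))
        + (∑ k ∈ range (m + 3),
            (if 2 ≤ k then a₂ * (m.choose (k - 2) : ℝ) * s ^ k * t ^ (m + 2 - k) else 0)) := by
    rw [← Finset.sum_add_distrib, ← Finset.sum_add_distrib]
    refine Finset.sum_congr rfl fun k _ => ?_
    split_ifs <;> ring
  have S1 : ∑ k ∈ range (m + 3), a₀ * (m.choose k : ℝ) * s ^ k * t ^ (m + 2 - k)
      = a₀ * t ^ 2 * (s + t) ^ m := by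
    rw [show m + 3 = (m + 2) + 1 from rfl, Finset.sum_range_succ, Finset.sum_range_succ,
      Nat.choose_eq_zero_of_lt (by omega), Nat.choose_eq_zero_of_lt (by omega)]
    push_cast
    rw [mul_zero, zero_mul, zero_mul, zero_mul, zero_mul, add_zero, add_zero, hbin,
      Finset.mul_sum]
    refine Finset.sum_congr rfl fun k hk => ?_
    have hk' : k ≤ m := by simpa [Nat.lt_succ_iff] using hk
    rw [show m + 2 - k = (m - k) + 2 from by omega, pow_add]
    ring
  have S2 : ∑ k ∈ range (m + 3),
        (if 1 ≤ k then b₁ * (m.choose (k - 1) : ℝ) * s ^ k * t ^ (m + 2 - k) else 0)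
      = b₁ * (s * t) * (s + t) ^ m := by
    rw [show m + 3 = (m + 2) + 1 from rfl, Finset.sum_range_succ']
    rw [if_neg (by omega : ¬ (1:ℕ) ≤ 0), add_zero]
    have e : ∀ k ∈ range (m + 2),
        (if 1 ≤ k + 1 then b₁ * (m.choose (k + 1 - 1) : ℝ) * s ^ (k + 1) *
          t ^ (m + 2 - (k + 1)) else 0)
        = b₁ * (m.choose k : ℝ) * s ^ (k + 1) * t ^ (m + 1 - k) := by
      intro k _
      rw [if_pos (by omega), show k + 1 - 1 = k from by omega,
        show m + 2 - (k + 1) = m + 1 - k from by omega]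
    rw [Finset.sum_congr rfl e, Finset.sum_range_succ, Nat.choose_eq_zero_of_lt (by omega)]
    push_cast
    rw [mul_zero, zero_mul, zero_mul, add_zero, hbin, Finset.mul_sum]
    refine Finset.sum_congr rfl fun k hk => ?_
    have hk' : k ≤ m := by simpa [Nat.lt_succ_iff] using hk
    rw [show m + 1 - k = (m - k) + 1 from by omega, pow_add, pow_succ]
    ring
  have S3 : ∑ k ∈ range (m + 3),
        (if 2 ≤ k then a₂ * (m.choose (k - 2) : ℝ) * s ^ k * t ^ (m + 2 - k) else 0)
      = a₂ * s ^ 2 * (s + t) ^ m := by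
    rw [show m + 3 = (m + 2) + 1 from rfl, Finset.sum_range_succ',
      show m + 2 = (m + 1) + 1 from rfl, Finset.sum_range_succ']
    rw [if_neg (by omega : ¬ (2:ℕ) ≤ 0), add_zero, if_neg (by omega : ¬ (2:ℕ) ≤ 0 + 1),
      add_zero]
    have e : ∀ k ∈ range (m + 1),
        (if 2 ≤ k + 1 + 1 then a₂ * (m.choose (k + 1 + 1 - 2) : ℝ) * s ^ (k + 1 + 1) *
          t ^ (m + 2 - (k + 1 + 1)) else 0)
        = a₂ * (m.choose k : ℝ) * s ^ (k + 1 + 1) * t ^ (m - k) := by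
      intro k _
      rw [if_pos (by omega), show k + 1 + 1 - 2 = k from by omega,
        show m + 2 - (k + 1 + 1) = m - k from by omega]
    rw [Finset.sum_congr rfl e, hbin, Finset.mul_sum]
    refine Finset.sum_congr rfl fun k hk => ?_
    rw [show k + 1 + 1 = k + 2 from rfl, pow_add]
    ring
  rw [split, S1, S2, S3]
  ring

lemma brep_quadratic {p : Polynomial ℝ} (u v : ℝ) (hv : v ≠ 0)
    (hev : ∀ x : ℝ, p.eval x = (x - u) ^ 2 + v ^ 2) : ∃ N, BRep N p := by
  set A : ℝ := (1 + u) / 2 with hA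
  set B : ℝ := (1 - u) / 2 with hB
  set a₂ : ℝ := A ^ 2 + v ^ 2 / 4 with ha₂
  set a₀ : ℝ := B ^ 2 + v ^ 2 / 4 with ha₀
  set b₁ : ℝ := v ^ 2 / 2 - 2 * (A * B) with hb₁
  have hv2 : 0 < v ^ 2 := by positivity
  have h₀ : 0 < a₀ := by rw [ha₀]; positivity
  have h₂ : 0 < a₂ := by rw [ha₂]; positivity
  have hd : b₁ ^ 2 < 4 * (a₀ * a₂) := by
    have e : 4 * (a₀ * a₂) - b₁ ^ 2 = v ^ 2 * (A + B) ^ 2 := by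
      rw [ha₀, ha₂, hb₁]; ring
    have eAB : A + B = 1 := by rw [hA, hB]; ring
    rw [eAB] at e
    nlinarith [e, hv2]
  obtain ⟨m, hm⟩ := key_lemma a₀ a₂ b₁ h₀ h₂ hd
  have h2m : (0 : ℝ) < 2 ^ m := by positivity
  refine ⟨m + 2, fun k => (a₀ * (m.choose k : ℝ)
      + (if 1 ≤ k then b₁ * (m.choose (k - 1) : ℝ) else 0)
      + (if 2 ≤ k then a₂ * (m.choose (k - 2) : ℝ) else 0)) / 2 ^ m,
    fun k => div_nonneg (hm k) h2m.le, fun x => ?_⟩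
  rw [hev x]
  rw [show m + 2 + 1 = m + 3 from rfl]
  have main := expand_sum a₀ b₁ a₂ (1 - x) (1 + x) m
  rw [show (1 - x) + (1 + x) = 2 from by ring] at main
  have goal2 : ((x - u) ^ 2 + v ^ 2) * 2 ^ m
      = ∑ k ∈ range (m + 3), ((a₀ * (m.choose k : ℝ)
        + (if 1 ≤ k then b₁ * (m.choose (k - 1) : ℝ) else 0)
        + (if 2 ≤ k then a₂ * (m.choose (k - 2) : ℝ) else 0)) / 2 ^ m) * (1 - x) ^ k *
          (1 + x) ^ (m + 2 - k) * 2 ^ m := by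
    have e2 : ∀ k ∈ range (m + 3), ((a₀ * (m.choose k : ℝ)
        + (if 1 ≤ k then b₁ * (m.choose (k - 1) : ℝ) else 0)
        + (if 2 ≤ k then a₂ * (m.choose (k - 2) : ℝ) else 0)) / 2 ^ m) * (1 - x) ^ k *
          (1 + x) ^ (m + 2 - k) * 2 ^ m
        = (a₀ * (m.choose k : ℝ)
        + (if 1 ≤ k then b₁ * (m.choose (k - 1) : ℝ) else 0)
        + (if 2 ≤ k then a₂ * (m.choose (k - 2) : ℝ) else 0)) * (1 - x) ^ k *
          (1 + x) ^ (m + 2 - k) := by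
      intro k _
      field_simp
    rw [Finset.sum_congr rfl e2, main]
    have eq1 : (x - u) ^ 2 + v ^ 2
        = a₂ * (1 - x) ^ 2 + b₁ * ((1 - x) * (1 + x)) + a₀ * (1 + x) ^ 2 := by
      rw [ha₂, ha₀, hb₁, hA, hB]; ring
    rw [eq1]
  have := mul_right_cancel₀ (ne_of_gt h2m) (goal2.trans (Finset.sum_mul _ _ _).symm).symm
  linarith [this]

lemma brep_main : ∀ (n : ℕ) (p : Polynomial ℝ), p.natDegree ≤ n →
    (∀ x ∈ Set.Icc (-1 : ℝ) 1, 0 < p.eval x) → ∃ N, BRep N p := by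
  intro n
  induction n with
  | zero =>
    intro p hdeg hp
    have hc := Polynomial.eq_C_of_natDegree_le_zero hdeg
    refine ⟨0, brep_const (c := p.coeff 0) ?_ ?_⟩
    · have h0 := hp 0 (by constructor <;> norm_num)
      rw [hc, eval_C] at h0
      exact h0.le
    · intro x; nth_rewrite 1 [hc]; rw [eval_C]
  | succ n ih =>
    intro p hdeg hp
    rcases le_or_gt p.natDegree n with hle | hlt
    · exact ih p hle hp
    have hdeg' : p.natDegree = n + 1 := le_antisymm hdeg hlt
    have hp0 : p ≠ 0 := fun h => by simp [h] at hdeg'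
    have hdpos : 0 < p.degree :=
      Polynomial.natDegree_pos_iff_degree_pos.mp (by omega)
    have hmapdeg : 0 < (p.map (algebraMap ℝ ℂ)).degree := by
      rwa [Polynomial.degree_map_eq_of_injective (algebraMap ℝ ℂ).injective]
    obtain ⟨z, hz⟩ := Complex.exists_root hmapdeg
    by_cases him : z.im = 0
    · -- real root
      set r : ℝ := z.re with hr
      have hzr : z = (r : ℝ) := by
        apply Complex.ext
        · simp [hr]
        · simp [him]
      have hroot : p.IsRoot r := by
        have h1 : Polynomial.eval ((algebraMap ℝ ℂ) r) (p.map (algebraMap ℝ ℂ)) = 0 := by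
          have : ((algebraMap ℝ ℂ) r) = z := by rw [hzr]; rfl
          rw [this]; exact hz
        rw [Polynomial.eval_map, Polynomial.eval₂_at_apply] at h1
        exact (algebraMap ℝ ℂ).injective (by simpa using h1)
      have hrange : r < -1 ∨ 1 < r := by
        by_contra hcon
        push_neg at hcon
        have h2 := hp r ⟨hcon.1, hcon.2⟩
        rw [hroot] at h2
        exact lt_irrefl 0 h2
      set q := p /ₘ (X - C r) with hqdef
      have hfac : (X - C r) * q = p := Polynomial.mul_divByMonic_eq_iff_isRoot.mpr hroot
      have hq0 : q ≠ 0 := by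
        intro h; rw [h, mul_zero] at hfac; exact hp0 hfac.symm
      have hqdeg : q.natDegree = n := by
        have h3 := Polynomial.natDegree_mul (Polynomial.X_sub_C_ne_zero r) hq0
        rw [hfac, Polynomial.natDegree_X_sub_C] at h3
        omega
      rcases hrange with hr1 | hr1
      · have hqpos : ∀ x ∈ Set.Icc (-1 : ℝ) 1, 0 < q.eval x := by
          intro x hx
          have h1 := hp x hx
          rw [← hfac, eval_mul, eval_sub, eval_X, eval_C] at h1
          have hx1 : 0 < x - r := by have := hx.1; linarith
          nlinarith [h1, hx1]
        obtain ⟨N₁, hN₁⟩ := ih q (le_of_eq hqdeg) hqpos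
        have hlin : BRep 1 (X - C r) :=
          brep_linear (a := (1 - r) / 2) (b := (-1 - r) / 2) (by linarith) (by linarith)
            (fun x => by simp; ring)
        exact ⟨1 + N₁, hfac ▸ brep_mul hlin hN₁⟩
      · have hqneg : ∀ x ∈ Set.Icc (-1 : ℝ) 1, 0 < (-q).eval x := by
          intro x hx
          have h1 := hp x hx
          rw [← hfac, eval_mul, eval_sub, eval_X, eval_C] at h1
          have hx1 : x - r < 0 := by have := hx.2; linarith
          rw [eval_neg]
          nlinarith [h1, hx1]
        obtain ⟨N₁, hN₁⟩ := ih (-q) (by rw [natDegree_neg]; exact le_of_eq hqdeg) hqneg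
        have hlin : BRep 1 (C r - X) :=
          brep_linear (a := (r - 1) / 2) (b := (r + 1) / 2) (by linarith) (by linarith)
            (fun x => by simp; ring)
        have hfac2 : (C r - X) * (-q) = p := by rw [← hfac]; ring
        exact ⟨1 + N₁, hfac2 ▸ brep_mul hlin hN₁⟩
    · -- nonreal root
      set u : ℝ := z.re with hu
      set v : ℝ := z.im with hvdef
      set g : Polynomial ℝ := X ^ 2 + (C (-2 * u) * X + C (u ^ 2 + v ^ 2)) with hg
      have hlin_le : (C (-2 * u) * X + C (u ^ 2 + v ^ 2)).degree ≤ 1 :=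
        Polynomial.degree_linear_le
      have hgm : g.Monic := by
        rw [hg, show (X : Polynomial ℝ) ^ 2 = X ^ (1 + 1) from by norm_num]
        exact Polynomial.monic_X_pow_add (lt_of_le_of_lt hlin_le (by norm_num))
      have hX2 : ((X : Polynomial ℝ) ^ 2).degree = 2 := Polynomial.degree_X_pow 2
      have hgdeg : g.degree = 2 := by
        rw [hg, Polynomial.degree_add_eq_left_of_degree_lt
          (by rw [hX2]; exact lt_of_le_of_lt hlin_le (by norm_num))]
        exact hX2
      have hgev : ∀ x : ℝ, g.eval x = (x - u) ^ 2 + v ^ 2 := by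
        intro x; rw [hg]; simp; ring
      have hsum := Polynomial.modByMonic_add_div p g
      have hrd : (p %ₘ g).degree < 2 := hgdeg ▸ Polynomial.degree_modByMonic_lt p hgm
      have hrd1 : (p %ₘ g).degree ≤ 1 := by
        by_cases h0 : p %ₘ g = 0
        · rw [h0]; simp
        · have h1 : (p %ₘ g).natDegree < 2 :=
            (Polynomial.natDegree_lt_iff_degree_lt h0).mpr (by exact_mod_cast hrd)
          rw [Polynomial.degree_eq_natDegree h0]
          exact_mod_cast Nat.lt_succ_iff.mp h1
      have hform := Polynomial.eq_X_add_C_of_degree_le_one hrd1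
      have hgz : Polynomial.eval z (g.map (algebraMap ℝ ℂ)) = 0 := by
        have hzvi : z - (u : ℂ) = (v : ℂ) * Complex.I := by
          apply Complex.ext <;> simp [hu, hvdef]
        rw [Polynomial.eval_map, hg]
        simp only [eval₂_add, eval₂_mul, eval₂_X_pow, eval₂_X, eval₂_C]
        have expand : z ^ 2 + ((algebraMap ℝ ℂ) (-2 * u) * z + (algebraMap ℝ ℂ) (u ^ 2 + v ^ 2))
            = (z - (u : ℂ)) ^ 2 + (v : ℂ) ^ 2 := by
          simp only [Complex.coe_algebraMap]
          push_cast
          ring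
        rw [expand, hzvi]
        have : ((v : ℂ) * Complex.I) ^ 2 = -(v : ℂ) ^ 2 := by
          rw [mul_pow, Complex.I_sq]; ring
        rw [this]; ring
      have hrz : Polynomial.eval z ((p %ₘ g).map (algebraMap ℝ ℂ)) = 0 := by
        have h4 := congrArg (Polynomial.map (algebraMap ℝ ℂ)) hsum
        rw [Polynomial.map_add, Polynomial.map_mul] at h4
        have h5 := congrArg (Polynomial.eval z) h4
        rw [eval_add, eval_mul, hgz, zero_mul, add_zero] at h5
        rw [h5]
        exact hz
      set c1 : ℝ := (p %ₘ g).coeff 1 with hc1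
      set c0 : ℝ := (p %ₘ g).coeff 0 with hc0
      rw [hform, Polynomial.map_add, Polynomial.map_mul, Polynomial.map_C, Polynomial.map_C,
        Polynomial.map_X, eval_add, eval_mul, eval_C, eval_C, eval_X] at hrz
      have him' : c1 * v = 0 := by
        have := congrArg Complex.im hrz
        simpa [hvdef] using this
      have hc1z : c1 = 0 := by
        rcases mul_eq_zero.mp him' with h | h
        · exact h
        · exact absurd h him
      have hc0z : c0 = 0 := by
        rw [hc1z] at hrz
        simpa using hrz
      have hrzero : p %ₘ g = 0 := by
        rw [hform, hc1z, hc0z]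
        simp
      have hfac : g * (p /ₘ g) = p := by
        conv_rhs => rw [← hsum, hrzero]
        rw [zero_add]
      set q := p /ₘ g with hqdef
      have hq0 : q ≠ 0 := by
        intro h; rw [h, mul_zero] at hfac; exact hp0 hfac.symm
      have hg0 : g ≠ 0 := hgm.ne_zero
      have hgnat : g.natDegree = 2 := Polynomial.natDegree_eq_of_degree_eq_some hgdeg
      have hqdeg : q.natDegree ≤ n := by
        have h3 := Polynomial.natDegree_mul hg0 hq0
        rw [hfac, hgnat] at h3
        omega
      have hgpos : ∀ x : ℝ, 0 < g.eval x := by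
        intro x
        rw [hgev]
        have : v ^ 2 > 0 := by positivity
        nlinarith [sq_nonneg (x - u)]
      have hqpos : ∀ x ∈ Set.Icc (-1 : ℝ) 1, 0 < q.eval x := by
        intro x hx
        have h1 := hp x hx
        rw [← hfac, eval_mul] at h1
        nlinarith [h1, hgpos x]
      obtain ⟨N₁, hN₁⟩ := ih q hqdeg hqpos
      obtain ⟨N₂, hN₂⟩ := brep_quadratic u v him hgev
      exact ⟨N₂ + N₁, hfac ▸ brep_mul hN₂ hN₁⟩

/-- Bernstein's theorem: every polynomial strictly positive on `[-1,1]` can be written as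
`p(x) = Σ_{k=0}^N a_k (1-x)^k (1+x)^{N-k}` with all `a_k ≥ 0`, for some `N ∈ ℕ`. -/
theorem bernstein_positive_representation (p : Polynomial ℝ)
    (hp : ∀ x ∈ Set.Icc (-1 : ℝ) 1, 0 < p.eval x) :
    ∃ (N : ℕ) (a : Fin (N + 1) → ℝ), (∀ k, 0 ≤ a k) ∧
      p = ∑ k : Fin (N + 1), C (a k) * (1 - X) ^ (k : ℕ) * (1 + X) ^ (N - (k : ℕ)) := by
  obtain ⟨N, f, hf, hfe⟩ := brep_main p.natDegree p le_rfl hp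
  refine ⟨N, fun k => f k, fun k => hf k, ?_⟩
  apply Polynomial.funext
  intro x
  rw [Polynomial.eval_finset_sum]
  simp only [eval_mul, eval_pow, eval_C, eval_sub, eval_add, eval_one, eval_X]
  rw [← Finset.sum_range (fun k => f k * (1 - x) ^ k * (1 + x) ^ (N - k))]
  exact hfe x
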